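/- Correspondence of matches: Let C be an adhesive category, let α : L ⇀ R, β : G ⇀ H, γ : S ⇀ T be rules and f : L ⟶ G, f₁ : L ⟶ S, g : R ⟶ H, g₁ : R ⟶ T matches such that f ⇒[α] g with corule β, g₁ ⇒[α†] f₁ with corule γ†, and g₁ is derivable by α. Then the set M_L = {f₂ : S ⟶ G a match | f₂ ∘ f₁ = f} is in bijection with the set M_R = {g₂ : T ⟶ H a match | g₂ ∘ g₁ = g}. -/

import Mathlib

open CategoryTheory Limits

universe v u

variable {C : Type u} [Category.{v} C]

/-- `IsFPBC f₁ f₂ g₁ g₂` states that `(g₁ : X ⟶ W, g₂ : W ⟶ Z)` is a final pullback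
complement of the composable pair `(f₁ : X ⟶ Y, f₂ : Y ⟶ Z)`. -/
structure IsFPBC {X Y Z W : C} (f₁ : X ⟶ Y) (f₂ : Y ⟶ Z) (g₁ : X ⟶ W) (g₂ : W ⟶ Z) :
    Prop where
  isPullback : IsPullback f₁ g₁ f₂ g₂
  final : ∀ {P Q : C} (f₁' : P ⟶ Y) (g₁' : P ⟶ Q) (g₂' : Q ⟶ Z),
      IsPullback f₁' g₁' f₂ g₂' → ∀ p : P ⟶ X, p ≫ f₁ = f₁' →
      ∃! u : Q ⟶ W, u ≫ g₂ = g₂' ∧ g₁' ≫ u = p ≫ g₁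

/-- A rule `L ⇀ R` is a span of monomorphisms. -/
structure Rule (L R : C) where
  K : C
  left : K ⟶ L
  right : K ⟶ R
  mono_left : Mono left
  mono_right : Mono right

/-- The reverse `α† : R ⇀ L` of a rule `α : L ⇀ R`. -/
def Rule.rev {L R : C} (α : Rule L R) : Rule R L :=
  ⟨α.K, α.right, α.left, α.mono_right, α.mono_left⟩

/-- `IsDerivation α f g β`: the comatch `g : R ⟶ H` is derived from the match `f : L ⟶ G`
by the rule `α : L ⇀ R`, with corule `β : G ⇀ H`. -/
def IsDerivation {L R G H : C} (α : Rule L R) (f : L ⟶ G) (g : R ⟶ H) (β : Rule G H) :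
    Prop :=
  ∃ h : α.K ⟶ β.K, Mono h ∧ IsFPBC α.left f h β.left ∧ IsPushout α.right h g β.right

/-- A match `g : R ⟶ H` is derivable by a rule `α : L ⇀ R` if `f ⇒[α] g` for some match `f`. -/
def Derivable {L R H : C} (α : Rule L R) (g : R ⟶ H) : Prop :=
  ∃ (G : C) (f : L ⟶ G) (β : Rule G H), Mono f ∧ IsDerivation α f g β

/-- A gluing of `G₁` and `G₂`: a cospan of monomorphisms. -/
structure Gluing (G₁ G₂ : C) where
  U : C
  i₁ : G₁ ⟶ U
  i₂ : G₂ ⟶ U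
  mono₁ : Mono i₁
  mono₂ : Mono i₂

/-- A gluing is minimal if every monomorphism through which both legs factor is an iso. -/
def Gluing.Minimal {G₁ G₂ : C} (gl : Gluing G₁ G₂) : Prop :=
  ∀ (V : C) (m : V ⟶ gl.U), Mono m →
    (∃ j₁ : G₁ ⟶ V, j₁ ≫ m = gl.i₁) → (∃ j₂ : G₂ ⟶ V, j₂ ≫ m = gl.i₂) → IsIso m

/-- Two gluings are isomorphic if there is an isomorphism of their tips commuting
with the legs. -/
def GluingIso {G₁ G₂ : C} (g h : Gluing G₁ G₂) : Prop :=
  ∃ u : g.U ≅ h.U, g.i₁ ≫ u.hom = h.i₁ ∧ g.i₂ ≫ u.hom = h.i₂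

/-- The set (type) of matches (monomorphisms) from `A` to `B`. -/
abbrev Mchs (A B : C) := {f : A ⟶ B // Mono f}

/-! ### Auxiliary lemmas -/

section Aux

/-- The square `g, 𝟙, m, g ≫ m` is a pullback when `m` is a mono. -/
lemma isPullback_id_comp_mono {Y Z Z' : C} (g : Y ⟶ Z) (m : Z ⟶ Z') [Mono m] :
    IsPullback g (𝟙 Y) m (g ≫ m) :=
  IsPullback.of_isLimit
    (PullbackCone.IsLimit.mk (by simp) (fun s => s.snd)
      (fun s => by
        have := s.condition
        rw [← Category.assoc] at this
        exact (cancel_mono m).mp this.symm)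
      (fun s => by simp)
      (fun s u h1 h2 => by simpa using h2))

/-- Compose a pullback square with a mono on the bottom-right. -/
lemma isPullback_comp_mono' {P X Y Z Z' : C} {fst : P ⟶ X} {snd : P ⟶ Y} {f : X ⟶ Z} {g : Y ⟶ Z}
    (hp : IsPullback fst snd f g) (m : Z ⟶ Z') [Mono m] :
    IsPullback fst snd (f ≫ m) (g ≫ m) := by
  simpa using hp.paste_vert (isPullback_id_comp_mono g m)

/-- If a morphism factors through a mono, the factorization square is a pullback. -/
lemma isPullback_id_of_factor {P K L : C} (pm : P ⟶ K) (m : K ⟶ L) [Mono m] :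
    IsPullback (𝟙 P) pm (pm ≫ m) m :=
  IsPullback.of_isLimit
    (PullbackCone.IsLimit.mk (by simp) (fun s => s.fst)
      (fun s => by simp)
      (fun s => by
        have := s.condition
        rw [← Category.assoc] at this
        exact (cancel_mono m).mp this)
      (fun s u h1 h2 => by simpa using h1))

/-- Cancel a mono appearing as the second factor of a pullback square. -/
lemma isPullback_cancel_mono {P X Y' Y Z : C} {fst : P ⟶ X} {snd : P ⟶ Y'} {u : Y' ⟶ Y}
    {f : X ⟶ Z} {g : Y ⟶ Z} [Mono u] (hp : IsPullback fst (snd ≫ u) f g) :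
    IsPullback fst snd f (u ≫ g) :=
  IsPullback.of_isLimit
    (PullbackCone.IsLimit.mk (by rw [hp.w, Category.assoc])
      (fun s => hp.lift s.fst (s.snd ≫ u) (by rw [s.condition, Category.assoc]))
      (fun s => hp.lift_fst _ _ _)
      (fun s => by
        apply (cancel_mono u).mp
        rw [Category.assoc, hp.lift_snd])
      (fun s w h1 h2 => by
        apply hp.hom_ext
        · rw [hp.lift_fst]; exact h1
        · rw [hp.lift_snd, ← Category.assoc, h2]))

/-- Pushouts along monomorphisms in an adhesive category are stable under pullback. -/
lemma pushout_stability [Adhesive C] {W X Y Z V : C} {f : W ⟶ X} {g : W ⟶ Y} {h : X ⟶ Z}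
    {i : Y ⟶ Z} [Mono f] [Mono g] [Mono h] [Mono i] (H : IsPushout f g h i) (x : V ⟶ Z) :
    IsPushout
      (pullback.lift (pullback.fst (f ≫ h) x ≫ f) (pullback.snd (f ≫ h) x)
        (by rw [Category.assoc]; exact pullback.condition) : pullback (f ≫ h) x ⟶ pullback h x)
      (pullback.lift (pullback.fst (f ≫ h) x ≫ g) (pullback.snd (f ≫ h) x)
        (by rw [Category.assoc, ← H.w]; exact pullback.condition) :
          pullback (f ≫ h) x ⟶ pullback i x)
      (pullback.snd h x) (pullback.snd i x) := by
  set kA : pullback (f ≫ h) x ⟶ pullback h x :=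
    pullback.lift (pullback.fst (f ≫ h) x ≫ f) (pullback.snd (f ≫ h) x)
      (by rw [Category.assoc]; exact pullback.condition) with hkA
  set kB : pullback (f ≫ h) x ⟶ pullback i x :=
    pullback.lift (pullback.fst (f ≫ h) x ≫ g) (pullback.snd (f ≫ h) x)
      (by rw [Category.assoc, ← H.w]; exact pullback.condition) with hkB
  have hfsq : IsPullback kA (pullback.fst (f ≫ h) x) (pullback.fst h x) f := by
    refine IsPullback.of_right ?_ (by rw [hkA]; exact pullback.lift_fst _ _ _) ((IsPullback.of_hasPullback h x).flip)
    have e : kA ≫ pullback.snd h x = pullback.snd (f ≫ h) x := by rw [hkA]; exact pullback.lift_snd _ _ _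
    rw [e]
    exact (IsPullback.of_hasPullback (f ≫ h) x).flip
  have hgsq : IsPullback kB (pullback.fst (f ≫ h) x) (pullback.fst i x) g := by
    refine IsPullback.of_right ?_ (by rw [hkB]; exact pullback.lift_fst _ _ _) ((IsPullback.of_hasPullback i x).flip)
    have e : kB ≫ pullback.snd i x = pullback.snd (f ≫ h) x := by rw [hkB]; exact pullback.lift_snd _ _ _
    rw [e, show g ≫ i = f ≫ h from H.w.symm]
    exact (IsPullback.of_hasPullback (f ≫ h) x).flip
  refine ((Adhesive.van_kampen H) kA kB (pullback.snd h x) (pullback.snd i x)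
      (pullback.fst (f ≫ h) x) (pullback.fst h x) (pullback.fst i x) x hfsq hgsq
      ⟨pullback.condition.symm⟩ ⟨pullback.condition.symm⟩ ⟨by rw [hkA, hkB, pullback.lift_snd, pullback.lift_snd]⟩).mpr
    ⟨(IsPullback.of_hasPullback h x).flip, (IsPullback.of_hasPullback i x).flip⟩

/-- Auxiliary step for `union_mono`: a universal property of the pushout injection. -/
lemma union_mono_aux [Adhesive C] {W X Y Z H₀ : C} {f : W ⟶ X} {g : W ⟶ Y} {h : X ⟶ Z}
    {i : Y ⟶ Z} {p : X ⟶ H₀} {q : Y ⟶ H₀} [Mono f] [Mono g] [Mono p] [Mono q]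
    (H : IsPushout f g h i) (hpb : IsPullback f g p q)
    {t : Z ⟶ H₀} (ht1 : h ≫ t = p) (ht2 : i ≫ t = q)
    {V : C} (y : V ⟶ X) (z : V ⟶ Z) (hyz : y ≫ p = z ≫ t) : z = y ≫ h := by
  haveI : Mono h := Adhesive.mono_of_isPushout_of_mono_right H
  haveI : Mono i := Adhesive.mono_of_isPushout_of_mono_left H
  have St := pushout_stability H z
  apply St.hom_ext
  · -- on the part over X
    have e1 : pullback.fst h z = pullback.snd h z ≫ y := by
      apply (cancel_mono p).mp
      calc pullback.fst h z ≫ p = (pullback.fst h z ≫ h) ≫ t := by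
            rw [Category.assoc, ht1]
        _ = (pullback.snd h z ≫ z) ≫ t := by rw [pullback.condition]
        _ = pullback.snd h z ≫ (y ≫ p) := by rw [Category.assoc, hyz]
        _ = (pullback.snd h z ≫ y) ≫ p := by rw [Category.assoc]
    rw [← Category.assoc, ← e1, pullback.condition]
  · -- on the part over Y
    have hw : (pullback.snd i z ≫ y) ≫ p = pullback.fst i z ≫ q := by
      calc (pullback.snd i z ≫ y) ≫ p = pullback.snd i z ≫ (z ≫ t) := by
            rw [Category.assoc, hyz]
        _ = (pullback.snd i z ≫ z) ≫ t := by rw [Category.assoc]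
        _ = (pullback.fst i z ≫ i) ≫ t := by rw [pullback.condition]
        _ = pullback.fst i z ≫ q := by rw [Category.assoc, ht2]
    have l1 : hpb.lift _ _ hw ≫ f = pullback.snd i z ≫ y := hpb.lift_fst _ _ hw
    have l2 : hpb.lift _ _ hw ≫ g = pullback.fst i z := hpb.lift_snd _ _ hw
    have key : pullback.snd i z ≫ y ≫ h = pullback.snd i z ≫ z := by
      rw [← Category.assoc, ← l1, Category.assoc, H.w, ← Category.assoc, l2,
        pullback.condition]
    exact key.symm

/-- In an adhesive category, the mediating morphism out of a pushout over a pullback of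
monomorphisms is a monomorphism ("unions of subobjects"). -/
lemma union_mono [Adhesive C] {W X Y Z H₀ : C} {f : W ⟶ X} {g : W ⟶ Y} {h : X ⟶ Z}
    {i : Y ⟶ Z} {p : X ⟶ H₀} {q : Y ⟶ H₀} [Mono f] [Mono g] [Mono p] [Mono q]
    (H : IsPushout f g h i) (hpb : IsPullback f g p q)
    {t : Z ⟶ H₀} (ht1 : h ≫ t = p) (ht2 : i ≫ t = q) : Mono t := by
  haveI : Mono h := Adhesive.mono_of_isPushout_of_mono_right H
  haveI : Mono i := Adhesive.mono_of_isPushout_of_mono_left H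
  refine ⟨fun {V} a b hab => ?_⟩
  have St := pushout_stability H a
  apply St.hom_ext
  · have h1 : pullback.fst h a ≫ p = (pullback.snd h a ≫ b) ≫ t := by
      calc pullback.fst h a ≫ p = (pullback.fst h a ≫ h) ≫ t := by rw [Category.assoc, ht1]
        _ = (pullback.snd h a ≫ a) ≫ t := by rw [pullback.condition]
        _ = (pullback.snd h a ≫ b) ≫ t := by
            rw [Category.assoc, Category.assoc, hab]
    have h2 := union_mono_aux H hpb ht1 ht2 (pullback.fst h a) (pullback.snd h a ≫ b) h1
    rw [h2, pullback.condition]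
  · have h1 : pullback.fst i a ≫ q = (pullback.snd i a ≫ b) ≫ t := by
      calc pullback.fst i a ≫ q = (pullback.fst i a ≫ i) ≫ t := by rw [Category.assoc, ht2]
        _ = (pullback.snd i a ≫ a) ≫ t := by rw [pullback.condition]
        _ = (pullback.snd i a ≫ b) ≫ t := by
            rw [Category.assoc, Category.assoc, hab]
    have h2 := union_mono_aux H.flip hpb.flip ht2 ht1 (pullback.fst i a) (pullback.snd i a ≫ b) h1
    rw [h2, pullback.condition]

/-- In an adhesive category, a pushout along a monomorphism is a final pullback complement. -/
lemma isFPBC_of_isPushout [Adhesive C] {K L D Z : C} {m : K ⟶ L} {n : K ⟶ D} {p : L ⟶ Z}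
    {q : D ⟶ Z} [Mono m] [Mono n] (H : IsPushout m n p q) : IsFPBC m p n q := by
  haveI hq : Mono q := Adhesive.mono_of_isPushout_of_mono_left H
  haveI hp : Mono p := Adhesive.mono_of_isPushout_of_mono_right H
  refine ⟨Adhesive.isPullback_of_isPushout_of_mono_left H, ?_⟩
  intro P Q f₁' g₁' g₂' hpb pm hpm
  subst hpm
  have he : (pm ≫ n) ≫ q = g₁' ≫ g₂' := by
    rw [Category.assoc, ← H.w, ← Category.assoc]
    exact hpb.w
  set e : P ⟶ pullback q g₂' := pullback.lift (pm ≫ n) g₁' he with hedef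
  have he1 : e ≫ pullback.fst q g₂' = pm ≫ n := pullback.lift_fst _ _ _
  have he2 : e ≫ pullback.snd q g₂' = g₁' := pullback.lift_snd _ _ _
  have hf : IsPullback (𝟙 P) pm (pm ≫ m) m := isPullback_id_of_factor pm m
  have sbig : IsPullback g₁' pm g₂' (n ≫ q) := by
    rw [← H.w]
    simpa using (hf.flip.paste_vert hpb).flip
  have hg : IsPullback e pm (pullback.fst q g₂') n := by
    refine IsPullback.of_right ?_ he1 ((IsPullback.of_hasPullback q g₂').flip)
    rw [he2]
    exact sbig
  have PO : IsPushout (𝟙 P) e g₁' (pullback.snd q g₂') :=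
    ((Adhesive.van_kampen H) (𝟙 P) e g₁' (pullback.snd q g₂') pm (pm ≫ m)
        (pullback.fst q g₂') g₂' hf hg ⟨hpb.w.symm⟩ ⟨pullback.condition.symm⟩
        ⟨by rw [Category.id_comp, he2]⟩).mpr
      ⟨hpb.flip, (IsPullback.of_hasPullback q g₂').flip⟩
  have wpo : (𝟙 P) ≫ e = e ≫ 𝟙 _ := by simp
  set r : Q ⟶ pullback q g₂' := PO.desc e (𝟙 _) wpo with hrdef
  have hr1 : g₁' ≫ r = e := PO.inl_desc _ _ _
  have hr2 : pullback.snd q g₂' ≫ r = 𝟙 _ := PO.inr_desc _ _ _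
  have hrs : r ≫ pullback.snd q g₂' = 𝟙 Q := by
    apply PO.hom_ext
    · rw [← Category.assoc, hr1, he2, Category.comp_id]
    · rw [← Category.assoc, hr2, Category.id_comp, Category.comp_id]
  refine ⟨r ≫ pullback.fst q g₂', ⟨?_, ?_⟩, ?_⟩
  · rw [Category.assoc, pullback.condition, ← Category.assoc, hrs, Category.id_comp]
  · rw [← Category.assoc, hr1, he1]
  · intro u' hu'
    apply (cancel_mono q).mp
    rw [hu'.1, Category.assoc, pullback.condition, ← Category.assoc, hrs, Category.id_comp]

end Aux

/-- Correspondence of matches: the factorizations of the match `f` through `f₁` are in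
bijection with the factorizations of the comatch `g` through `g₁`. -/
theorem correspondence_of_matches [Adhesive C] {L R S T G H : C}
    (α : Rule L R) (β : Rule G H) (γ : Rule S T)
    (f : L ⟶ G) (f₁ : L ⟶ S) (g : R ⟶ H) (g₁ : R ⟶ T)
    [Mono f] [Mono f₁] [Mono g] [Mono g₁]
    (h1 : IsDerivation α f g β)
    (h2 : IsDerivation α.rev g₁ f₁ γ.rev)
    (h3 : Derivable α g₁) :
    Nonempty ({f₂ : S ⟶ G // Mono f₂ ∧ f₁ ≫ f₂ = f} ≃
      {g₂ : T ⟶ H // Mono g₂ ∧ g₁ ≫ g₂ = g}) := by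
  obtain ⟨hb, hbm, fpbcL, poR⟩ := h1
  dsimp only [IsDerivation, Rule.rev] at h2
  obtain ⟨k, km, fpbcR0, poL0⟩ := h2
  obtain ⟨G₀, f₀, δ, f₀m, h₀, h₀m, fpbc₀, po₀⟩ := h3
  haveI := α.mono_left; haveI := α.mono_right
  haveI := β.mono_left; haveI := β.mono_right
  haveI := γ.mono_left; haveI := γ.mono_right
  haveI := δ.mono_left; haveI := δ.mono_right
  haveI := hbm; haveI := km; haveI := h₀m
  have fpbcR : IsFPBC α.right g₁ k γ.right := fpbcR0
  have poL : IsPushout α.left k f₁ γ.left := poL0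
  clear fpbcR0 poL0
  -- `(k, γ.right)` is a pushout of `(α.right, g₁)` since `g₁` is derivable:
  -- both `(k, γ.right)` and `(h₀, δ.right)` are final pullback complements.
  have fpbcδ : IsFPBC α.right g₁ h₀ δ.right := isFPBC_of_isPushout po₀
  obtain ⟨u₀, ⟨hu₀1, hu₀2⟩, -⟩ :=
    fpbcR.final α.right h₀ δ.right fpbcδ.isPullback (𝟙 _) (Category.id_comp _)
  obtain ⟨v₀, ⟨hv₀1, hv₀2⟩, -⟩ :=
    fpbcδ.final α.right k γ.right fpbcR.isPullback (𝟙 _) (Category.id_comp _)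
  have huv : u₀ ≫ v₀ = 𝟙 _ := by
    apply (cancel_mono δ.right).mp
    rw [Category.assoc, hv₀1, hu₀1, Category.id_comp]
  have hvu : v₀ ≫ u₀ = 𝟙 _ := by
    apply (cancel_mono γ.right).mp
    rw [Category.assoc, hu₀1, hv₀1, Category.id_comp]
  haveI : IsIso u₀ := ⟨v₀, huv, hvu⟩
  have posq : IsPushout δ.right u₀ (𝟙 T) γ.right :=
    IsPushout.of_vert_isIso ⟨by rw [Category.comp_id, hu₀1]⟩
  have poγ : IsPushout α.right k g₁ γ.right := by
    have hpaste := po₀.paste_vert posq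
    rw [hu₀2, Category.id_comp, Category.comp_id] at hpaste
    exact hpaste
  -- existence of the connecting morphisms between the corule contexts
  have fwd : ∀ (f₂ : S ⟶ G), Mono f₂ → f₁ ≫ f₂ = f →
      ∃ u : γ.K ⟶ β.K, u ≫ β.left = γ.left ≫ f₂ ∧ k ≫ u = hb := by
    intro f₂ m2 hf2
    haveI := m2
    have pb1 : IsPullback α.left k f₁ γ.left := Adhesive.isPullback_of_isPushout_of_mono_left poL
    have pb2 : IsPullback α.left k f (γ.left ≫ f₂) := by
      have hc := isPullback_comp_mono' pb1 f₂
      rwa [hf2] at hc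
    obtain ⟨u, ⟨hu1, hu2⟩, -⟩ := fpbcL.final α.left k (γ.left ≫ f₂) pb2 (𝟙 _) (Category.id_comp _)
    exact ⟨u, hu1, by rw [hu2, Category.id_comp]⟩
  have fpbcβR : IsFPBC α.right g hb β.right := isFPBC_of_isPushout poR
  have bwd : ∀ (g₂ : T ⟶ H), Mono g₂ → g₁ ≫ g₂ = g →
      ∃ u : γ.K ⟶ β.K, u ≫ β.right = γ.right ≫ g₂ ∧ k ≫ u = hb := by
    intro g₂ m2 hg2
    haveI := m2
    have pb2 : IsPullback α.right k g (γ.right ≫ g₂) := by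
      have hc := isPullback_comp_mono' fpbcR.isPullback g₂
      rwa [hg2] at hc
    obtain ⟨u, ⟨hu1, hu2⟩, -⟩ :=
      fpbcβR.final α.right k (γ.right ≫ g₂) pb2 (𝟙 _) (Category.id_comp _)
    exact ⟨u, hu1, by rw [hu2, Category.id_comp]⟩
  -- from a connecting morphism, build the factorizations
  have mkS : ∀ (u : γ.K ⟶ β.K), Mono u → k ≫ u = hb →
      ∃ f₂ : S ⟶ G, Mono f₂ ∧ f₁ ≫ f₂ = f ∧ γ.left ≫ f₂ = u ≫ β.left := by
    intro u mu hu
    haveI := mu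
    have w0 : α.left ≫ f = k ≫ (u ≫ β.left) := by
      rw [← Category.assoc, hu]
      exact fpbcL.isPullback.w
    refine ⟨poL.desc f (u ≫ β.left) w0, ?_, poL.inl_desc _ _ _, poL.inr_desc _ _ _⟩
    have pb : IsPullback α.left k f (u ≫ β.left) :=
      isPullback_cancel_mono (by rw [hu]; exact fpbcL.isPullback)
    haveI : Mono (u ≫ β.left) := mono_comp _ _
    exact union_mono poL pb (poL.inl_desc _ _ _) (poL.inr_desc _ _ _)
  have mkT : ∀ (u : γ.K ⟶ β.K), Mono u → k ≫ u = hb →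
      ∃ g₂ : T ⟶ H, Mono g₂ ∧ g₁ ≫ g₂ = g ∧ γ.right ≫ g₂ = u ≫ β.right := by
    intro u mu hu
    haveI := mu
    have w0 : α.right ≫ g = k ≫ (u ≫ β.right) := by
      rw [← Category.assoc, hu]
      exact poR.w
    refine ⟨poγ.desc g (u ≫ β.right) w0, ?_, poγ.inl_desc _ _ _, poγ.inr_desc _ _ _⟩
    have poU : IsPushout γ.right u (poγ.desc g (u ≫ β.right) w0) β.right := by
      refine IsPushout.of_top ?_ (poγ.inr_desc _ _ _) poγ
      rw [hu, poγ.inl_desc]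
      exact poR
    exact Adhesive.mono_of_isPushout_of_mono_right poU
  choose uF huF1 huF2 using fwd
  choose uB huB1 huB2 using bwd
  have monoF : ∀ (f₂ : S ⟶ G) (m2 : Mono f₂) (e : f₁ ≫ f₂ = f), Mono (uF f₂ m2 e) := by
    intro f₂ m2 e
    haveI := m2
    haveI : Mono (γ.left ≫ f₂) := mono_comp _ _
    exact mono_of_mono_fac (huF1 f₂ m2 e)
  have monoB : ∀ (g₂ : T ⟶ H) (m2 : Mono g₂) (e : g₁ ≫ g₂ = g), Mono (uB g₂ m2 e) := by
    intro g₂ m2 e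
    haveI := m2
    haveI : Mono (γ.right ≫ g₂) := mono_comp _ _
    exact mono_of_mono_fac (huB1 g₂ m2 e)
  choose ΦT hΦm hΦ1 hΦ2 using mkT
  choose ΨS hΨm hΨ1 hΨ2 using mkS
  have roundL : ∀ (u : γ.K ⟶ β.K) (mu : Mono u) (hu : k ≫ u = hb) (m2 : Mono (ΦT u mu hu))
      (e : g₁ ≫ ΦT u mu hu = g), uB (ΦT u mu hu) m2 e = u := by
    intro u mu hu m2 e
    apply (cancel_mono β.right).mp
    rw [huB1, hΦ2]
  have roundR : ∀ (u : γ.K ⟶ β.K) (mu : Mono u) (hu : k ≫ u = hb) (m2 : Mono (ΨS u mu hu))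
      (e : f₁ ≫ ΨS u mu hu = f), uF (ΨS u mu hu) m2 e = u := by
    intro u mu hu m2 e
    apply (cancel_mono β.left).mp
    rw [huF1, hΨ2]
  refine ⟨⟨fun x => ⟨ΦT (uF x.1 x.2.1 x.2.2) (monoF _ _ _) (huF2 _ _ _),
      hΦm _ _ _, hΦ1 _ _ _⟩,
    fun y => ⟨ΨS (uB y.1 y.2.1 y.2.2) (monoB _ _ _) (huB2 _ _ _),
      hΨm _ _ _, hΨ1 _ _ _⟩, ?_, ?_⟩⟩
  · -- left inverse
    rintro ⟨f₂, m2, hf2⟩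
    apply Subtype.ext
    dsimp only
    apply poL.hom_ext
    · rw [hΨ1, hf2]
    · rw [hΨ2, roundL, huF1]
  · -- right inverse
    rintro ⟨g₂, m2, hg2⟩
    apply Subtype.ext
    dsimp only
    apply poγ.hom_ext
    · rw [hΦ1, hg2]
    · rw [hΦ2, roundR, huB1]
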